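/- Let G=(V,E) be a twinless strongly connected directed graph and let G^b be the undirected simple graph on vertex set V in which distinct vertices x and y are adjacent if and only if x ≈ y. Then every cycle of G^b spans a clique: if v₀, v₁, …, v_l is a cycle in G^b (so v_{i−1} is adjacent to v_i for i ∈ {1,…,l} and v_l is adjacent to v₀), then v_i ≈ v_j for all distinct i, j ∈ {0,1,…,l}. In particular, G^b is a chordal graph. -/

import Mathlib

/-- A directed graph on vertex type `V` is given by its edge relation `E`.
`restrictEdges E S` is the edge relation of the subgraph induced on `S`. -/
def restrictEdges {V : Type*} (E : V → V → Prop) (S : Set V) : V → V → Prop :=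
  fun a b => E a b ∧ a ∈ S ∧ b ∈ S

/-- The induced subgraph on `S` is strongly connected: every vertex of `S` reaches
every vertex of `S` by a directed path staying inside `S`. -/
def StronglyConnectedOn {V : Type*} (E : V → V → Prop) (S : Set V) : Prop :=
  ∀ ⦃x⦄, x ∈ S → ∀ ⦃y⦄, y ∈ S → Relation.ReflTransGen (restrictEdges E S) x y

/-- The induced subgraph on `S` is twinless strongly connected: it has a strongly
connected spanning subgraph (edge set `E'` inside `S`) with no pair of antiparallel
edges (if `(x, y) ∈ E'` then `(y, x) ∉ E'`). -/
def TwinlessSCOn {V : Type*} (E : V → V → Prop) (S : Set V) : Prop :=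
  ∃ E' : V → V → Prop,
    (∀ a b, E' a b → E a b ∧ a ∈ S ∧ b ∈ S) ∧
    (∀ a b, E' a b → ¬ E' b a) ∧
    StronglyConnectedOn E' S

/-- `C` is a strongly connected component of the subgraph induced on `S`:
a maximal subset of `S` whose induced subgraph is strongly connected. -/
def IsSCCWithin {V : Type*} (E : V → V → Prop) (S C : Set V) : Prop :=
  C ⊆ S ∧ StronglyConnectedOn E C ∧
    ∀ D : Set V, C ⊆ D → D ⊆ S → StronglyConnectedOn E D → D = C

/-- `C` is a twinless strongly connected component of the subgraph induced on `S`: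
a maximal subset of `S` whose induced subgraph is twinless strongly connected. -/
def IsTSCCWithin {V : Type*} (E : V → V → Prop) (S C : Set V) : Prop :=
  C ⊆ S ∧ TwinlessSCOn E C ∧
    ∀ D : Set V, C ⊆ D → D ⊆ S → TwinlessSCOn E D → D = C

/-- `x` and `y` lie in the same twinless strongly connected component of the
subgraph induced on `S`. -/
def SameTSCC {V : Type*} (E : V → V → Prop) (S : Set V) (x y : V) : Prop :=
  ∃ C : Set V, IsTSCCWithin E S C ∧ x ∈ C ∧ y ∈ C

/-- `x` and `y` lie in the same strongly connected component of the
subgraph induced on `S`. -/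
def SameSCC {V : Type*} (E : V → V → Prop) (S : Set V) (x y : V) : Prop :=
  ∃ C : Set V, IsSCCWithin E S C ∧ x ∈ C ∧ y ∈ C

/-- The relation `x ≈ y` ("x 2t-related to y"): `x` and `y` are distinct and, for every
vertex `w ∉ {x, y}`, the vertices `x, y` lie in the same twinless strongly connected
component of `G ∖ {w}`. -/
def Rel2t {V : Type*} (E : V → V → Prop) (x y : V) : Prop :=
  x ≠ y ∧ ∀ w : V, w ≠ x → w ≠ y → SameTSCC E (({w} : Set V)ᶜ) x y

/-- `x` and `y` are distinct and, for every vertex `w ∉ {x, y}`, the vertices `x, y`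
lie in the same strongly connected component of `G ∖ {w}`. -/
def Rel2s {V : Type*} (E : V → V → Prop) (x y : V) : Prop :=
  x ≠ y ∧ ∀ w : V, w ≠ x → w ≠ y → SameSCC E (({w} : Set V)ᶜ) x y

/-- A 2-twinless block: a maximal set `B` with `|B| ≥ 2` such that `x ≈ y`
for all distinct `x, y ∈ B`. -/
def Is2TwinlessBlock {V : Type*} (E : V → V → Prop) (B : Set V) : Prop :=
  B.Nontrivial ∧ (∀ ⦃x⦄, x ∈ B → ∀ ⦃y⦄, y ∈ B → x ≠ y → Rel2t E x y) ∧
    ∀ D : Set V, B ⊆ D → (∀ ⦃x⦄, x ∈ D → ∀ ⦃y⦄, y ∈ D → x ≠ y → Rel2t E x y) → D = B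

/-- A 2-strong block: a maximal set `B` with `|B| ≥ 2` such that for all distinct
`x, y ∈ B` and every `u ∉ {x, y}`, the vertices `x, y` lie in the same strongly
connected component of `G ∖ {u}`. -/
def Is2StrongBlock {V : Type*} (E : V → V → Prop) (B : Set V) : Prop :=
  B.Nontrivial ∧ (∀ ⦃x⦄, x ∈ B → ∀ ⦃y⦄, y ∈ B → x ≠ y → Rel2s E x y) ∧
    ∀ D : Set V, B ⊆ D → (∀ ⦃x⦄, x ∈ D → ∀ ⦃y⦄, y ∈ D → x ≠ y → Rel2s E x y) → D = B

/-- A twinless articulation point: a vertex whose removal increases the number of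
twinless strongly connected components. -/
def IsTwinlessArticulationPoint {V : Type*} (E : V → V → Prop) (v : V) : Prop :=
  ({C : Set V | IsTSCCWithin E Set.univ C}).ncard <
    ({C : Set V | IsTSCCWithin E (({v} : Set V)ᶜ) C}).ncard

/-- The undirected simple graph `G^b` on the vertex set of `G`, in which distinct
vertices `x` and `y` are adjacent if and only if `x ≈ y`. -/
def relGraph {V : Type*} (E : V → V → Prop) : SimpleGraph V where
  Adj x y := Rel2t E x y
  symm := by
    constructor
    rintro x y ⟨hxy, h⟩
    refine ⟨hxy.symm, fun w hwy hwx => ?_⟩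
    obtain ⟨C, hC, hx, hy⟩ := h w hwx hwy
    exact ⟨C, hC, hy, hx⟩
  loopless := ⟨fun x h => h.1 rfl⟩

/-- A simple graph is chordal if every cycle `v₀, v₁, …, v_l` of length at least four
(`l ≥ 3`) has a chord: an edge joining two non-consecutive vertices of the cycle. -/
def IsChordal {V : Type*} (G : SimpleGraph V) : Prop :=
  ∀ (l : ℕ) (v : ℕ → V), 3 ≤ l →
    (∀ i j : ℕ, i ≤ l → j ≤ l → i ≠ j → v i ≠ v j) →
    (∀ i : ℕ, 1 ≤ i → i ≤ l → G.Adj (v (i - 1)) (v i)) →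
    G.Adj (v l) (v 0) →
    ∃ i j : ℕ, i < j ∧ j ≤ l ∧ j ≠ i + 1 ∧ ¬(i = 0 ∧ j = l) ∧ G.Adj (v i) (v j)

section Aux

variable {V : Type*}

private lemma rtg_lift {α : Type*} {r s : α → α → Prop}
    (h : ∀ a b, r a b → Relation.ReflTransGen s a b) :
    ∀ {x y : α}, Relation.ReflTransGen r x y → Relation.ReflTransGen s x y := by
  intro x y hxy
  induction hxy with
  | refl => exact .refl
  | tail _ h2 ih => exact ih.trans (h _ _ h2)

private lemma twinless_union (E : V → V → Prop) {C1 C2 : Set V}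
    (h1 : TwinlessSCOn E C1) (h2 : TwinlessSCOn E C2) (hne : (C1 ∩ C2).Nonempty) :
    TwinlessSCOn E (C1 ∪ C2) := by
  obtain ⟨E1, hE1sub, hE1tw, hE1sc⟩ := h1
  obtain ⟨E2, hE2sub, hE2tw, hE2sc⟩ := h2
  obtain ⟨z, hz1, hz2⟩ := hne
  refine ⟨fun a b => E1 a b ∨ (E2 a b ∧ ¬ E1 b a), ?_, ?_, ?_⟩
  · rintro a b (h | ⟨h, -⟩)
    · exact ⟨(hE1sub a b h).1, Or.inl (hE1sub a b h).2.1, Or.inl (hE1sub a b h).2.2⟩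
    · exact ⟨(hE2sub a b h).1, Or.inr (hE2sub a b h).2.1, Or.inr (hE2sub a b h).2.2⟩
  · rintro a b (h | ⟨h, hn⟩) (h' | ⟨h', hn'⟩)
    · exact hE1tw a b h h'
    · exact hn' h
    · exact hn h'
    · exact hE2tw a b h h'
  · have lift1 : ∀ x y : V, Relation.ReflTransGen (restrictEdges E1 C1) x y →
        Relation.ReflTransGen
          (restrictEdges (fun a b => E1 a b ∨ (E2 a b ∧ ¬ E1 b a)) (C1 ∪ C2)) x y := by
      refine fun x y => rtg_lift (fun a b hab => Relation.ReflTransGen.single ?_)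
      exact ⟨Or.inl hab.1, Or.inl hab.2.1, Or.inl hab.2.2⟩
    have lift2 : ∀ x y : V, Relation.ReflTransGen (restrictEdges E2 C2) x y →
        Relation.ReflTransGen
          (restrictEdges (fun a b => E1 a b ∨ (E2 a b ∧ ¬ E1 b a)) (C1 ∪ C2)) x y := by
      refine fun x y => rtg_lift (fun a b hab => ?_)
      by_cases hrev : E1 b a
      · -- reroute through C1
        have ha : a ∈ C1 := (hE1sub b a hrev).2.2
        have hb : b ∈ C1 := (hE1sub b a hrev).2.1
        exact lift1 a b (hE1sc ha hb)
      · exact Relation.ReflTransGen.single ⟨Or.inr ⟨hab.1, hrev⟩, Or.inr hab.2.1,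
          Or.inr hab.2.2⟩
    rintro x (hx | hx) y (hy | hy)
    · exact lift1 x y (hE1sc hx hy)
    · exact (lift1 x z (hE1sc hx hz1)).trans (lift2 z y (hE2sc hz2 hy))
    · exact (lift2 x z (hE2sc hx hz2)).trans (lift1 z y (hE1sc hz1 hy))
    · exact lift2 x y (hE2sc hx hy)

private lemma tscc_eq (E : V → V → Prop) {S C1 C2 : Set V}
    (h1 : IsTSCCWithin E S C1) (h2 : IsTSCCWithin E S C2)
    (hne : (C1 ∩ C2).Nonempty) : C1 = C2 := by
  have hu : TwinlessSCOn E (C1 ∪ C2) := twinless_union E h1.2.1 h2.2.1 hne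
  have e1 : C1 ∪ C2 = C1 :=
    h1.2.2 _ Set.subset_union_left (Set.union_subset h1.1 h2.1) hu
  have e2 : C1 ∪ C2 = C2 :=
    h2.2.2 _ Set.subset_union_right (Set.union_subset h1.1 h2.1) hu
  rw [← e1, e2]

private lemma sameTSCC_symm {E : V → V → Prop} {S : Set V} {x y : V}
    (h : SameTSCC E S x y) : SameTSCC E S y x := by
  obtain ⟨C, hC, hx, hy⟩ := h; exact ⟨C, hC, hy, hx⟩

private lemma sameTSCC_trans {E : V → V → Prop} {S : Set V} {x y z : V}
    (h1 : SameTSCC E S x y) (h2 : SameTSCC E S y z) : SameTSCC E S x z := by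
  obtain ⟨C, hC, hx, hy⟩ := h1
  obtain ⟨D, hD, hy', hz⟩ := h2
  have : C = D := tscc_eq E hC hD ⟨y, hy, hy'⟩
  exact ⟨C, hC, hx, this ▸ hz⟩

private lemma sameTSCC_refl [Fintype V] (E : V → V → Prop) {S : Set V} {x : V}
    (hx : x ∈ S) : SameTSCC E S x x := by
  classical
  set T : Set (Set V) := {C | x ∈ C ∧ C ⊆ S ∧ TwinlessSCOn E C} with hT
  have hsing : ({x} : Set V) ∈ T := by
    refine ⟨rfl, by simpa using hx, fun _ _ => False, by simp, by simp, ?_⟩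
    intro a ha b hb
    rw [Set.mem_singleton_iff] at ha hb
    subst ha; subst hb; exact .refl
  obtain ⟨C, hCT, hCmax⟩ := Set.Finite.exists_maximalFor Set.ncard T (Set.toFinite T)
    ⟨_, hsing⟩
  obtain ⟨hxC, hCS, hCtw⟩ := hCT
  refine ⟨C, ⟨hCS, hCtw, ?_⟩, hxC, hxC⟩
  intro D hCD hDS hDtw
  have hDT : D ∈ T := ⟨hCD hxC, hDS, hDtw⟩
  have hle : C.ncard ≤ D.ncard := Set.ncard_le_ncard hCD (Set.toFinite D)
  have heq : C.ncard = D.ncard := le_antisymm hle (hCmax hDT hle)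
  exact (Set.eq_of_subset_of_ncard_le hCD heq.ge (Set.toFinite D)).symm

private lemma rel2t_symm {E : V → V → Prop} {x y : V} (h : Rel2t E x y) :
    Rel2t E y x :=
  ⟨h.1.symm, fun w hwy hwx => sameTSCC_symm (h.2 w hwx hwy)⟩

private lemma cycle_clique [Fintype V] (E : V → V → Prop) (l : ℕ) (v : ℕ → V)
    (hl : 2 ≤ l)
    (hinj : ∀ i j : ℕ, i ≤ l → j ≤ l → i ≠ j → v i ≠ v j)
    (hadj : ∀ i : ℕ, 1 ≤ i → i ≤ l → Rel2t E (v (i - 1)) (v i))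
    (hlast : Rel2t E (v l) (v 0)) :
    ∀ i j : ℕ, i ≤ l → j ≤ l → i ≠ j → Rel2t E (v i) (v j) := by
  suffices H : ∀ i j : ℕ, i < j → j ≤ l → Rel2t E (v i) (v j) by
    intro i j hi hj hij
    rcases lt_or_gt_of_ne hij with h | h
    · exact H i j h hj
    · exact rel2t_symm (H j i h hi)
  intro i j hij hjl
  have hil : i ≤ l := le_trans (le_of_lt hij) hjl
  refine ⟨hinj i j hil hjl (Nat.ne_of_lt hij), ?_⟩
  intro w hwi hwj
  -- chain lemma along consecutive cycle vertices
  have chain : ∀ b : ℕ, b ≤ l → ∀ a : ℕ, a ≤ b →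
      (∀ m : ℕ, a ≤ m → m ≤ b → w ≠ v m) →
      SameTSCC E (({w} : Set V)ᶜ) (v a) (v b) := by
    intro b
    induction b with
    | zero =>
      intro _ a ha hm
      interval_cases a
      exact sameTSCC_refl E (by
        simpa [Set.mem_compl_singleton_iff] using (hm 0 le_rfl le_rfl).symm)
    | succ n ih =>
      intro hbl a ha hm
      rcases eq_or_lt_of_le ha with rfl | h
      · exact sameTSCC_refl E (by
          simpa [Set.mem_compl_singleton_iff] using (hm (n + 1) le_rfl le_rfl).symm)
      · have h1 : SameTSCC E (({w} : Set V)ᶜ) (v a) (v n) :=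
          ih (by omega) a (by omega) (fun m hm1 hm2 => hm m hm1 (by omega))
        have h2 : Rel2t E (v n) (v (n + 1)) := by
          have := hadj (n + 1) (by omega) hbl
          simpa using this
        exact sameTSCC_trans h1
          (h2.2 w (hm n (by omega) (by omega)) (hm (n + 1) (by omega) le_rfl))
  by_cases hcase : ∀ m : ℕ, i ≤ m → m ≤ j → w ≠ v m
  · exact chain j hjl i (le_of_lt hij) hcase
  · push_neg at hcase
    obtain ⟨k, hik, hkj, hwk⟩ := hcase
    have hki : i < k := by
      rcases eq_or_lt_of_le hik with rfl | h
      · exact absurd hwk hwi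
      · exact h
    have hkj' : k < j := by
      rcases eq_or_lt_of_le hkj with rfl | h
      · exact absurd hwk hwj
      · exact h
    have hout : ∀ p : ℕ, p ≤ l → (p ≤ i ∨ j ≤ p) → w ≠ v p := by
      intro p hpl hp hwp
      have hkl : k ≤ l := le_trans hkj hjl
      have hne : k ≠ p := by omega
      exact hinj k p hkl hpl hne (hwk ▸ hwp.symm ▸ rfl)
    have c1 : SameTSCC E (({w} : Set V)ᶜ) (v j) (v l) :=
      chain l le_rfl j hjl (fun m hm1 hm2 => hout m hm2 (Or.inr hm1))
    have c2 : SameTSCC E (({w} : Set V)ᶜ) (v l) (v 0) :=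
      hlast.2 w (hout l le_rfl (Or.inr hjl)) (hout 0 (by omega) (Or.inl (by omega)))
    have c3 : SameTSCC E (({w} : Set V)ᶜ) (v 0) (v i) :=
      chain i hil 0 (by omega) (fun m hm1 hm2 => hout m (le_trans hm2 hil) (Or.inl hm2))
    exact sameTSCC_symm (sameTSCC_trans (sameTSCC_trans c1 c2) c3)

end Aux

/-- Every cycle of `G^b` spans a clique: if `v₀, v₁, …, v_l` is a cycle in `G^b`, then
`v_i ≈ v_j` for all distinct `i, j ∈ {0, …, l}`. In particular, `G^b` is chordal. -/
theorem relGraph_cycles_span_cliques_and_chordal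
    {V : Type*} [Fintype V] (E : V → V → Prop)
    (hG : TwinlessSCOn E Set.univ) :
    (∀ (l : ℕ) (v : ℕ → V), 2 ≤ l →
      (∀ i j : ℕ, i ≤ l → j ≤ l → i ≠ j → v i ≠ v j) →
      (∀ i : ℕ, 1 ≤ i → i ≤ l → (relGraph E).Adj (v (i - 1)) (v i)) →
      (relGraph E).Adj (v l) (v 0) →
      ∀ i j : ℕ, i ≤ l → j ≤ l → i ≠ j → Rel2t E (v i) (v j)) ∧
    IsChordal (relGraph E) := by
  refine ⟨fun l v hl hinj hadj hlast => cycle_clique E l v hl hinj hadj hlast, ?_⟩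
  intro l v hl hinj hadj hlast
  refine ⟨0, 2, by omega, by omega, by omega, ?_, ?_⟩
  · rintro ⟨-, h2⟩; omega
  · exact cycle_clique E l v (by omega) hinj hadj hlast 0 2 (by omega) (by omega)
      (by omega)
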